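/- Let s and p be natural numbers with 0 < p < s, let sensor locations s_1, …, s_s ∈ ℝ² and a nonempty finite hypothesis set 𝓗 ⊂ ℝ² be given with ‖h − s_i‖ > 0 for all h ∈ 𝓗 and all i, and suppose that for each h ∈ 𝓗 the distances ‖h − s_1‖, …, ‖h − s_s‖ are pairwise distinct. For h ∈ 𝓗 set μ_i(h) = −10·log₁₀ ‖h − s_i‖ and let K(h) ⊆ Fin s be the set of indices of the p smallest distances ‖h − s_i‖. Let σ : Fin s → ℝ with σ_i > 0, and for each h let P_h be the product measure on Fin s → ℝ whose i-th factor is the real Gaussian measure with mean μ_i(h) and variance σ_i². Then the error probability P_e^{(p)} := 1 − (1/|𝓗|) ∑_{h∈𝓗} P_h({z | min_{i∈K(h)} z_i > max_{j∉K(h)} z_j}) satisfies P_e^{(p)} = 1 − (1/|𝓗|) ∑_{h∈𝓗} ∫_ℝ [∏_{i∈K(h)} (1 − Φ((v − μ_i(h))/σ_i))] · [∑_{j∉K(h)} (1/σ_j) φ((v − μ_j(h))/σ_j) ∏_{ℓ∉K(h), ℓ≠j} Φ((v − μ_ℓ(h))/σ_ℓ)] dv, where Φ and φ are the cumulative distribution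 function and density of the standard real Gaussian. -/

import Mathlib

open MeasureTheory ProbabilityTheory

/-- Standard Gaussian density `φ`. -/
noncomputable def stdGaussPDF (u : ℝ) : ℝ :=
  (Real.sqrt (2 * Real.pi))⁻¹ * Real.exp (-(u ^ 2) / 2)

/-- Standard Gaussian cumulative distribution function `Φ`. -/
noncomputable def stdGaussCDF (t : ℝ) : ℝ :=
  ∫ u in Set.Iic t, stdGaussPDF u

lemma stdGaussPDF_eq_gaussianPDFReal : stdGaussPDF = gaussianPDFReal 0 1 := by
  ext x
  simp [stdGaussPDF, gaussianPDFReal]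

lemma stdGaussPDF_nonneg (u : ℝ) : 0 ≤ stdGaussPDF u := by
  rw [stdGaussPDF_eq_gaussianPDFReal]; exact gaussianPDFReal_nonneg 0 1 u

lemma integrable_stdGaussPDF : Integrable stdGaussPDF := by
  rw [stdGaussPDF_eq_gaussianPDFReal]; exact integrable_gaussianPDFReal 0 1

lemma stdGaussCDF_nonneg (t : ℝ) : 0 ≤ stdGaussCDF t :=
  setIntegral_nonneg measurableSet_Iic fun x _ => stdGaussPDF_nonneg x

lemma stdGaussCDF_le_one (t : ℝ) : stdGaussCDF t ≤ 1 := by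
  have h1 : ∫ u, stdGaussPDF u = 1 := by
    rw [stdGaussPDF_eq_gaussianPDFReal]; exact integral_gaussianPDFReal_eq_one 0 one_ne_zero
  rw [stdGaussCDF, ← h1]
  exact setIntegral_le_integral integrable_stdGaussPDF (ae_of_all _ stdGaussPDF_nonneg)

lemma stdGaussCDF_mono : Monotone stdGaussCDF := fun a b hab =>
  setIntegral_mono_set integrable_stdGaussPDF.integrableOn
    (ae_of_all _ stdGaussPDF_nonneg) (HasSubset.Subset.eventuallyLE (Set.Iic_subset_Iic.2 hab))

lemma measurable_stdGaussCDF : Measurable stdGaussCDF := stdGaussCDF_mono.measurable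

lemma gaussianPDFReal_eq_std (m : ℝ) {σ : ℝ} (hσ : 0 < σ) (x : ℝ) :
    gaussianPDFReal m ((σ ^ 2).toNNReal) x = (1 / σ) * stdGaussPDF ((x - m) / σ) := by
  have hσ2 : ((Real.toNNReal (σ ^ 2) : NNReal) : ℝ) = σ ^ 2 := Real.coe_toNNReal _ (sq_nonneg σ)
  have h2π : (0:ℝ) < Real.sqrt (2 * Real.pi) := Real.sqrt_pos.2 (by positivity)
  rw [gaussianPDFReal, stdGaussPDF, hσ2]
  rw [show (2 * Real.pi * σ ^ 2) = (2 * Real.pi) * σ ^ 2 by ring,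
    Real.sqrt_mul (by positivity), Real.sqrt_sq hσ.le]
  rw [show -((x - m) / σ) ^ 2 / 2 = -(x - m) ^ 2 / (2 * σ ^ 2) by rw [div_pow]; ring]
  field_simp

lemma gaussianReal_eq_map (m : ℝ) {σ : ℝ} (hσ : 0 < σ) :
    gaussianReal m ((σ ^ 2).toNNReal)
      = (gaussianReal 0 1).map (fun u => σ * u + m) := by
  have h1 : (gaussianReal 0 1).map (σ * ·) = gaussianReal 0 ((σ ^ 2).toNNReal) := by
    rw [gaussianReal_map_const_mul (μ := 0) (v := 1) σ]
    congr 1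
    · ring
    · ext
      simp [Real.coe_toNNReal _ (sq_nonneg σ)]
  have h2 := gaussianReal_map_add_const (μ := 0) (v := (σ ^ 2).toNNReal) m
  rw [← h1, Measure.map_map (by fun_prop) (by fun_prop)] at h2
  rw [zero_add] at h2
  exact h2.symm


lemma var_ne_zero {σ : ℝ} (hσ : 0 < σ) : Real.toNNReal (σ ^ 2) ≠ 0 := by
  simp only [ne_eq, Real.toNNReal_eq_zero, not_le]
  positivity

lemma gaussianReal_Iic (m : ℝ) {σ : ℝ} (hσ : 0 < σ) (t : ℝ) :
    gaussianReal m (Real.toNNReal (σ ^ 2)) (Set.Iic t)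
      = ENNReal.ofReal (stdGaussCDF ((t - m) / σ)) := by
  rw [gaussianReal_eq_map m hσ, Measure.map_apply (by fun_prop) measurableSet_Iic]
  have hpre : (fun u : ℝ => σ * u + m) ⁻¹' Set.Iic t = Set.Iic ((t - m) / σ) := by
    ext u
    simp only [Set.mem_preimage, Set.mem_Iic, le_div_iff₀ hσ]
    constructor <;> intro h <;> nlinarith
  rw [hpre, gaussianReal_apply_eq_integral 0 one_ne_zero, ← stdGaussPDF_eq_gaussianPDFReal]
  rfl

lemma gaussianReal_Ioi (m : ℝ) {σ : ℝ} (hσ : 0 < σ) (t : ℝ) :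
    gaussianReal m (Real.toNNReal (σ ^ 2)) (Set.Ioi t)
      = ENNReal.ofReal (1 - stdGaussCDF ((t - m) / σ)) := by
  have h := measure_compl (μ := gaussianReal m (Real.toNNReal (σ ^ 2)))
    (measurableSet_Iic (a := t)) (measure_ne_top _ _)
  rw [Set.compl_Iic] at h
  rw [h, measure_univ, gaussianReal_Iic m hσ t,
    ENNReal.ofReal_sub _ (stdGaussCDF_nonneg _), ENNReal.ofReal_one]

lemma gaussianReal_noAtoms (m : ℝ) {v : NNReal} (hv : v ≠ 0) : NoAtoms (gaussianReal m v) := by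
  constructor
  intro x
  rw [gaussianReal_apply m hv, setLIntegral_measure_zero _ _ (measure_singleton x)]

lemma key_lemma {n : ℕ} (K : Finset (Fin (n+1))) (hK : K.Nonempty) (hKc : Kᶜ.Nonempty)
    (μ σ : Fin (n+1) → ℝ) (hσ : ∀ i, 0 < σ i) :
    ((Measure.pi fun i => gaussianReal (μ i) (Real.toNNReal ((σ i) ^ 2)))
        {z : Fin (n+1) → ℝ | K.inf' hK z > Kᶜ.sup' hKc z}).toReal
      = ∫ v : ℝ, (∏ i ∈ K, (1 - stdGaussCDF ((v - μ i) / σ i))) *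
          (∑ j ∈ Kᶜ, (1 / σ j) * stdGaussPDF ((v - μ j) / σ j) *
            ∏ ℓ ∈ Kᶜ.erase j, stdGaussCDF ((v - μ ℓ) / σ ℓ)) := by
  set ν : Fin (n+1) → Measure ℝ :=
    fun i => gaussianReal (μ i) (Real.toNNReal ((σ i) ^ 2)) with hν
  haveI : ∀ i, NoAtoms (ν i) := fun i => gaussianReal_noAtoms _ (var_ne_zero (hσ i))
  set F : Fin (n+1) → ℝ → ℝ := fun i v => stdGaussCDF ((v - μ i) / σ i) with hF
  set G : Fin (n+1) → ℝ → ℝ :=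
    fun j v => (∏ i ∈ K, (1 - F i v)) * ∏ ℓ ∈ Kᶜ.erase j, F ℓ v with hG
  set A : Fin (n+1) → Set (Fin (n+1) → ℝ) :=
    fun j => {z | (∀ ℓ ∈ Kᶜ, z ℓ ≤ z j) ∧ ∀ i ∈ K, z j < z i} with hA
  have hF0 : ∀ i v, 0 ≤ F i v := fun i v => stdGaussCDF_nonneg _
  have hF1 : ∀ i v, F i v ≤ 1 := fun i v => stdGaussCDF_le_one _
  have hFmeas : ∀ i, Measurable (F i) := fun i =>
    measurable_stdGaussCDF.comp (by fun_prop)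
  have hGmeas : ∀ j, Measurable (G j) := by
    intro j
    apply Measurable.mul
    · exact Finset.measurable_prod _ fun i _ => (measurable_const.sub (hFmeas i))
    · exact Finset.measurable_prod _ fun i _ => (hFmeas i)
  have hG0 : ∀ j v, 0 ≤ G j v := by
    intro j v
    apply mul_nonneg
    · exact Finset.prod_nonneg fun i _ => by linarith [hF1 i v]
    · exact Finset.prod_nonneg fun i _ => hF0 i v
  have hG1 : ∀ j v, G j v ≤ 1 := by
    intro j v
    have h1 : ∏ i ∈ K, (1 - F i v) ≤ 1 :=
      Finset.prod_le_one (fun i _ => by linarith [hF1 i v]) (fun i _ => by linarith [hF0 i v])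
    have h2 : ∏ ℓ ∈ Kᶜ.erase j, F ℓ v ≤ 1 :=
      Finset.prod_le_one (fun i _ => hF0 i v) (fun i _ => hF1 i v)
    have h2' : 0 ≤ ∏ ℓ ∈ Kᶜ.erase j, F ℓ v := Finset.prod_nonneg fun i _ => hF0 i v
    exact mul_le_one₀ h1 h2' h2
  -- the event as a union over the argmax
  have hAset : {z : Fin (n+1) → ℝ | K.inf' hK z > Kᶜ.sup' hKc z} = ⋃ j ∈ Kᶜ, A j := by
    ext z
    simp only [Set.mem_setOf_eq, Set.mem_iUnion, hA, exists_prop]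
    constructor
    · intro hz
      obtain ⟨j, hjmem, hj⟩ := Finset.exists_mem_eq_sup' hKc z
      refine ⟨j, hjmem, fun ℓ hℓ => ?_, fun i hi => ?_⟩
      · rw [← hj]; exact Finset.le_sup' z hℓ
      · calc z j = Kᶜ.sup' hKc z := hj.symm
          _ < K.inf' hK z := hz
          _ ≤ z i := Finset.inf'_le z hi
    · rintro ⟨j, hjmem, h1, h2⟩
      exact lt_of_le_of_lt (Finset.sup'_le hKc z h1) ((Finset.lt_inf'_iff hK).2 h2)
  have hAmeas : ∀ j, MeasurableSet (A j) := by
    intro j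
    have : A j = (⋂ ℓ ∈ (Kᶜ : Finset (Fin (n+1))), {z : Fin (n+1) → ℝ | z ℓ ≤ z j})
        ∩ ⋂ i ∈ K, {z : Fin (n+1) → ℝ | z j < z i} := by
      ext z; simp [hA]
    rw [this]
    apply MeasurableSet.inter
    · exact MeasurableSet.biInter (Set.to_countable _) fun ℓ _ =>
        measurableSet_le (measurable_pi_apply ℓ) (measurable_pi_apply j)
    · exact MeasurableSet.biInter (Set.to_countable _) fun i _ =>
        measurableSet_lt (measurable_pi_apply j) (measurable_pi_apply i)
  -- ties are null
  have tie : ∀ j j' : Fin (n+1), j' ≠ j → (Measure.pi ν) {z : Fin (n+1) → ℝ | z j' = z j} = 0 := by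
    intro j j' hne
    obtain ⟨k', hk'⟩ := Fin.exists_succAbove_eq hne
    have mp := measurePreserving_piFinSuccAbove ν j
    have hset : {z : Fin (n+1) → ℝ | z j' = z j}
        = (MeasurableEquiv.piFinSuccAbove (fun _ => ℝ) j) ⁻¹'
            {q : ℝ × (Fin n → ℝ) | q.2 k' = q.1} := by
      ext z
      simp [MeasurableEquiv.piFinSuccAbove, Fin.removeNth, Fin.insertNthEquiv, hk']
    have hTm : MeasurableSet {q : ℝ × (Fin n → ℝ) | q.2 k' = q.1} :=
      measurableSet_eq_fun (by fun_prop) (by fun_prop)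
    rw [hset, mp.measure_preimage hTm.nullMeasurableSet, Measure.prod_apply hTm]
    have hzero : ∀ x : ℝ, (Measure.pi fun k => ν (j.succAbove k))
        (Prod.mk x ⁻¹' {q : ℝ × (Fin n → ℝ) | q.2 k' = q.1}) = 0 := by
      intro x
      have : (Prod.mk x ⁻¹' {q : ℝ × (Fin n → ℝ) | q.2 k' = q.1})
          = {w : Fin n → ℝ | w k' = x} := rfl
      rw [this]
      haveI : NullSingletonClass (ν (j.succAbove k')) := ‹∀ i, NoAtoms (ν i)› (j.succAbove k')
      exact Measure.pi_hyperplane (fun k => ν (j.succAbove k)) k' x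
    simp only [hzero, lintegral_zero]
  -- main per-j computation
  have hAj : ∀ j ∈ Kᶜ, (Measure.pi ν) (A j) = ∫⁻ x, ENNReal.ofReal (G j x) ∂(ν j) := by
    intro j hj
    have hjK : j ∉ K := Finset.mem_compl.1 hj
    set T : Set (ℝ × (Fin n → ℝ)) :=
      {q | ∀ k, q.2 k ∈ (if j.succAbove k ∈ K then Set.Ioi q.1 else Set.Iic q.1)} with hT
    have hTmeas : MeasurableSet T := by
      rw [hT, Set.setOf_forall]
      apply MeasurableSet.iInter
      intro k
      by_cases hk : j.succAbove k ∈ K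
      · simp only [hk, if_true, Set.mem_Ioi]
        exact measurableSet_lt (by fun_prop) (by fun_prop)
      · simp only [hk, if_false, Set.mem_Iic]
        exact measurableSet_le (by fun_prop) (by fun_prop)
    have hApre : A j = (MeasurableEquiv.piFinSuccAbove (fun _ => ℝ) j) ⁻¹' T := by
      ext z
      simp only [hA, Set.mem_setOf_eq, Set.mem_preimage, hT,
        MeasurableEquiv.piFinSuccAbove, Fin.insertNthEquiv, MeasurableEquiv.coe_mk,
        Equiv.coe_fn_symm_mk, Fin.removeNth]
      constructor
      · rintro ⟨h1, h2⟩ k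
        by_cases hk : j.succAbove k ∈ K
        · simp only [hk, if_true, Set.mem_Ioi]
          exact h2 _ hk
        · simp only [hk, if_false, Set.mem_Iic]
          exact h1 _ (Finset.mem_compl.2 hk)
      · intro hq
        constructor
        · intro ℓ hℓ
          rcases eq_or_ne ℓ j with rfl | hne
          · exact le_refl _
          · obtain ⟨k, rfl⟩ := Fin.exists_succAbove_eq hne
            have hk := hq k
            rw [if_neg (Finset.mem_compl.1 hℓ)] at hk
            exact hk
        · intro i hi
          have hne : i ≠ j := fun h => hjK (h ▸ hi)
          obtain ⟨k, rfl⟩ := Fin.exists_succAbove_eq hne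
          have hk := hq k
          rw [if_pos hi] at hk
          exact hk
    rw [hApre, (measurePreserving_piFinSuccAbove ν j).measure_preimage
      hTmeas.nullMeasurableSet, Measure.prod_apply hTmeas]
    apply lintegral_congr
    intro x
    have hslice : (Prod.mk x ⁻¹' T)
        = Set.pi Set.univ (fun k => if j.succAbove k ∈ K then Set.Ioi x else Set.Iic x) := by
      ext w
      simp [hT, Set.mem_pi]
    rw [hslice, Measure.pi_pi]
    have hfactor : ∀ k : Fin n,
        ν (j.succAbove k) (if j.succAbove k ∈ K then Set.Ioi x else Set.Iic x)
          = ENNReal.ofReal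
              (if j.succAbove k ∈ K then 1 - F (j.succAbove k) x else F (j.succAbove k) x) := by
      intro k
      by_cases hk : j.succAbove k ∈ K
      · simp only [hk, if_true]
        exact gaussianReal_Ioi _ (hσ _) x
      · simp only [hk, if_false]
        exact gaussianReal_Iic _ (hσ _) x
    rw [Finset.prod_congr rfl (fun k _ => hfactor k),
      ← ENNReal.ofReal_prod_of_nonneg]
    · congr 1
      have hre : ∏ k : Fin n,
          (if j.succAbove k ∈ K then 1 - F (j.succAbove k) x else F (j.succAbove k) x)
          = ∏ i ∈ Finset.univ.erase j, (if i ∈ K then 1 - F i x else F i x) := by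
        apply Finset.prod_bij (fun k _ => j.succAbove k)
        · intro k _
          exact Finset.mem_erase.2 ⟨Fin.succAbove_ne j k, Finset.mem_univ _⟩
        · intro k1 _ k2 _ h
          exact Fin.succAbove_right_injective h
        · intro i hi
          obtain ⟨k, hk⟩ := Fin.exists_succAbove_eq (Finset.mem_erase.1 hi).1
          exact ⟨k, Finset.mem_univ _, hk⟩
        · intro k _
          rfl
      rw [hre]
      have hsplit : Finset.univ.erase j = K ∪ Kᶜ.erase j := by
        ext i
        simp only [Finset.mem_erase, Finset.mem_univ, and_true, Finset.mem_union,
          Finset.mem_compl]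
        constructor
        · intro h
          by_cases hiK : i ∈ K
          · exact Or.inl hiK
          · exact Or.inr ⟨h, hiK⟩
        · rintro (hiK | ⟨h, _⟩)
          · exact fun he => hjK (he ▸ hiK)
          · exact h
      have hdisj : Disjoint K (Kᶜ.erase j) := by
        rw [Finset.disjoint_left]
        intro i hi hi'
        exact (Finset.mem_compl.1 (Finset.mem_of_mem_erase hi')) hi
      rw [hsplit, Finset.prod_union hdisj, hG]
      congr 1
      · exact Finset.prod_congr rfl fun i hi => if_pos hi
      · refine Finset.prod_congr rfl fun i hi => if_neg ?_
        exact Finset.mem_compl.1 (Finset.mem_of_mem_erase hi)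
    · intro k _
      split
      · linarith [hF1 (j.succAbove k) x]
      · exact hF0 _ x
  have htoReal : ∀ j ∈ Kᶜ, ((Measure.pi ν) (A j)).toReal = ∫ x, G j x ∂(ν j) := by
    intro j hj
    rw [hAj j hj]
    exact (integral_eq_lintegral_of_nonneg_ae (ae_of_all _ (hG0 j))
      (hGmeas j).aestronglyMeasurable).symm
  have hwd : ∀ j : Fin (n+1), ∫ x, G j x ∂(ν j)
      = ∫ x, (1 / σ j) * stdGaussPDF ((x - μ j) / σ j) * G j x := by
    intro j
    have h1 : ν j = volume.withDensity
        (fun x => ((Real.toNNReal (gaussianPDFReal (μ j) (Real.toNNReal ((σ j) ^ 2)) x)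
          : NNReal) : ENNReal)) :=
      gaussianReal_of_var_ne_zero _ (var_ne_zero (hσ j))
    rw [h1, integral_withDensity_eq_integral_smul
      ((measurable_gaussianPDFReal _ _).real_toNNReal) (G j)]
    refine integral_congr_ae (Filter.Eventually.of_forall fun x => ?_)
    beta_reduce
    rw [NNReal.smul_def, Real.coe_toNNReal _ (gaussianPDFReal_nonneg _ _ _),
      gaussianPDFReal_eq_std _ (hσ j) x, smul_eq_mul]
  have hpdfmeas : Measurable stdGaussPDF := by
    rw [stdGaussPDF_eq_gaussianPDFReal]; exact measurable_gaussianPDFReal 0 1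
  have hInt : ∀ j ∈ Kᶜ,
      Integrable (fun x => (1 / σ j) * stdGaussPDF ((x - μ j) / σ j) * G j x) := by
    intro j _
    apply Integrable.mono (integrable_gaussianPDFReal (μ j) (Real.toNNReal ((σ j) ^ 2)))
    · apply Measurable.aestronglyMeasurable
      apply Measurable.mul _ (hGmeas j)
      fun_prop
    · refine Filter.Eventually.of_forall fun x => ?_
      rw [Real.norm_eq_abs, Real.norm_eq_abs]
      have hpdf : (1 / σ j) * stdGaussPDF ((x - μ j) / σ j)
          = gaussianPDFReal (μ j) (Real.toNNReal ((σ j) ^ 2)) x :=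
        (gaussianPDFReal_eq_std _ (hσ j) x).symm
      have h0 : 0 ≤ (1 / σ j) * stdGaussPDF ((x - μ j) / σ j) := by
        have := stdGaussPDF_nonneg ((x - μ j) / σ j)
        have := (hσ j)
        positivity
      rw [abs_of_nonneg (mul_nonneg h0 (hG0 j x)), abs_of_nonneg (by rw [← hpdf]; exact h0),
        ← hpdf]
      calc (1 / σ j) * stdGaussPDF ((x - μ j) / σ j) * G j x
          ≤ (1 / σ j) * stdGaussPDF ((x - μ j) / σ j) * 1 :=
            mul_le_mul_of_nonneg_left (hG1 j x) h0
        _ = (1 / σ j) * stdGaussPDF ((x - μ j) / σ j) := mul_one _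
  have hpair : Set.Pairwise ↑(Kᶜ) (Function.onFun (AEDisjoint (Measure.pi ν)) A) := by
    intro j hj j' hj' hne
    refine measure_mono_null ?_ (tie j j' hne.symm)
    rintro z ⟨hz1, hz2⟩
    have h1 : z j' ≤ z j := hz1.1 j' (Finset.mem_coe.1 hj')
    have h2 : z j ≤ z j' := hz2.1 j (Finset.mem_coe.1 hj)
    exact le_antisymm h1 h2
  rw [hAset, measure_biUnion_finset₀ hpair (fun j _ => (hAmeas j).nullMeasurableSet),
    ENNReal.toReal_sum (fun j _ => measure_ne_top _ _),
    Finset.sum_congr rfl htoReal, Finset.sum_congr rfl (fun j _ => hwd j),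
    ← integral_finset_sum _ hInt]
  refine integral_congr_ae (Filter.Eventually.of_forall fun x => ?_)
  beta_reduce
  rw [Finset.mul_sum]
  refine Finset.sum_congr rfl fun j hj => ?_
  simp only [hG, hF]
  ring

/-- Corollary 1: with `μ i (h) = −10 log₁₀ ‖h − s i‖` and `K h` the index set of
the `p` smallest distances, the top-`p` error probability under a uniform prior on `𝓗` equals
`1 − (1/|𝓗|) ∑_{h∈𝓗} ∫ℝ [∏_{i∈K(h)}(1 − Φ((v−μ_i(h))/σ_i))]·
  [∑_{j∉K(h)}(1/σ_j)φ((v−μ_j(h))/σ_j)∏_{ℓ∉K(h),ℓ≠j}Φ((v−μ_ℓ(h))/σ_ℓ)] dv`. -/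
theorem error_probability_top_p {s p : ℕ} (hp : 0 < p) (hps : p < s)
    (sloc : Fin s → EuclideanSpace ℝ (Fin 2))
    (𝓗 : Finset (EuclideanSpace ℝ (Fin 2))) (h𝓗 : 𝓗.Nonempty)
    (hpos : ∀ h ∈ 𝓗, ∀ i, 0 < ‖h - sloc i‖)
    (hdistinct : ∀ h ∈ 𝓗, Function.Injective fun i => ‖h - sloc i‖)
    (K : EuclideanSpace ℝ (Fin 2) → Finset (Fin s))
    (hKcard : ∀ h, (K h).card = p)
    (hKclosest : ∀ h ∈ 𝓗, ∀ i ∈ K h, ∀ j ∉ K h, ‖h - sloc i‖ < ‖h - sloc j‖)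
    (σ : Fin s → ℝ) (hσ : ∀ i, 0 < σ i) :
    1 - (1 / (𝓗.card : ℝ)) * ∑ h ∈ 𝓗,
      ((Measure.pi fun i =>
          gaussianReal (-10 * Real.logb 10 ‖h - sloc i‖) (Real.toNNReal ((σ i) ^ 2)))
        {z : Fin s → ℝ |
          (K h).inf' (Finset.card_pos.mp (by rw [hKcard h]; exact hp)) z >
          ((K h)ᶜ).sup'
            (Finset.card_pos.mp
              (by rw [Finset.card_compl, hKcard h, Fintype.card_fin]; omega)) z}).toReal
      =
    1 - (1 / (𝓗.card : ℝ)) * ∑ h ∈ 𝓗,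
      ∫ v : ℝ,
        (∏ i ∈ K h,
          (1 - stdGaussCDF ((v - (-10 * Real.logb 10 ‖h - sloc i‖)) / σ i))) *
        (∑ j ∈ (K h)ᶜ, (1 / σ j) *
            stdGaussPDF ((v - (-10 * Real.logb 10 ‖h - sloc j‖)) / σ j) *
          ∏ ℓ ∈ ((K h)ᶜ).erase j,
            stdGaussCDF ((v - (-10 * Real.logb 10 ‖h - sloc ℓ‖)) / σ ℓ)) := by
  obtain ⟨n, rfl⟩ : ∃ n, s = n + 1 := ⟨s - 1, by omega⟩
  refine congrArg (fun r => 1 - (1 / (𝓗.card : ℝ)) * r) ?_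
  refine Finset.sum_congr rfl fun h _ => ?_
  exact key_lemma (K h) _ _ _ σ hσ
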